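/- Let $\pi$ be a QSD for the killed process $(X_t)$ with bounded strictly positive pointwise right eigenfunction $h$ ($P_t h = \lambda^t h$, $\pi(h) = 1$), and let $(Q_t)$ be the $Q$-process transition kernel $Q_t(x,dy) := \frac{h(y)\lambda^{-t}}{h(x)}P_t(x,dy)$ with stationary distribution $\beta(dx) := h(x)\pi(dx)$. If there exist $t_0 > 0$ and a submarkovian kernel $R$ with $\pi(dx)P_{t_0}(x,dy) = \pi(dy)R(y,dx)$, then $\beta(dx)Q_{t_0}(x,dy) = \beta(dy)\,\lambda^{-t_0}R(y,dx)$; in particular the $Q$-process satisfies the reverse-kernel identity with reverse kernel $\lambda^{-t_0}R$, which is Markovian ($\lambda^{-t_0}R1 = 1$ $\beta$-a.e.). -/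

import Mathlib

open MeasureTheory ProbabilityTheory
open scoped ENNReal NNReal

/-- if `R` is a reverse kernel for `P_{t₀}` at quasi-stationarity,
then the `Q`-process kernel `Q_{t₀}(x,dy) = h(y) λ^{-t₀} / h(x) · P_{t₀}(x,dy)` with
stationary distribution `β = h π` satisfies
`β(dx) Q_{t₀}(x,dy) = β(dy) λ^{-t₀} R(y,dx)`, and `λ^{-t₀} R` is Markovian:
`λ^{-t₀} R1 = 1` β-a.e. -/
theorem stmt_16 {χ : Type*} [MeasurableSpace χ]
    (P : Kernel χ χ) [IsSFiniteKernel P] (hPsub : ∀ x, P x Set.univ ≤ 1)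
    (π : Measure χ) [IsProbabilityMeasure π]
    (lam : ℝ) (hl0 : 0 < lam) (hl1 : lam ≤ 1)
    (t0 : ℝ) (ht0 : 0 < t0)
    (hQSD : π.bind (fun x => P x) = ENNReal.ofReal (lam ^ t0) • π)
    (h : χ → ℝ) (hhm : Measurable h) (hhpos : ∀ x, 0 < h x)
    (hhbd : ∃ C, ∀ x, h x ≤ C)
    (heig : ∀ x, ∫ y, h y ∂(P x) = lam ^ t0 * h x)
    (hnorm : ∫ x, h x ∂π = 1)
    (Q : Kernel χ χ)
    (hQ : ∀ x, ∀ s : Set χ, MeasurableSet s →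
      Q x s = (ENNReal.ofReal (lam ^ t0))⁻¹ * (ENNReal.ofReal (h x))⁻¹ *
        ∫⁻ y in s, ENNReal.ofReal (h y) ∂(P x))
    (R : Kernel χ χ) (hRsub : ∀ y, R y Set.univ ≤ 1)
    (hrev : ∀ s t : Set χ, MeasurableSet s → MeasurableSet t →
      ∫⁻ x in s, P x t ∂π = ∫⁻ y in t, R y s ∂π) :
    (∀ s t : Set χ, MeasurableSet s → MeasurableSet t →
      ∫⁻ x in s, Q x t ∂(π.withDensity fun z => ENNReal.ofReal (h z))
        = ∫⁻ y in t, (ENNReal.ofReal (lam ^ t0))⁻¹ * R y s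
            ∂(π.withDensity fun z => ENNReal.ofReal (h z))) ∧
    ∀ᵐ y ∂(π.withDensity fun z => ENNReal.ofReal (h z)),
      (ENNReal.ofReal (lam ^ t0))⁻¹ * R y Set.univ = 1 := by
  set Λ : ℝ≥0∞ := ENNReal.ofReal (lam ^ t0) with hΛ
  have hlt0 : (0:ℝ) < lam ^ t0 := Real.rpow_pos_of_pos hl0 t0
  have hΛ0 : Λ ≠ 0 := by simp [hΛ, ENNReal.ofReal_pos.2 hlt0, ne_of_gt]
  have hΛtop : Λ ≠ ⊤ := ENNReal.ofReal_ne_top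
  have hH : Measurable fun z => ENNReal.ofReal (h z) := hhm.ennreal_ofReal
  have hHne : ∀ x, ENNReal.ofReal (h x) ≠ 0 := fun x => by
    simp [ENNReal.ofReal_pos.2 (hhpos x), ne_of_gt]
  -- key identity
  have key : ∀ s t : Set χ, MeasurableSet s → MeasurableSet t →
      ∫⁻ x in s, (∫⁻ y in t, ENNReal.ofReal (h y) ∂(P x)) ∂π
        = ∫⁻ y in t, ENNReal.ofReal (h y) * R y s ∂π := by
    intro s t hs ht
    have hmeq : (π.restrict s).bind (fun x => P x)
        = π.withDensity (fun y => R y s) := by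
      ext A hA
      rw [Measure.bind_apply hA (P.measurable.aemeasurable), withDensity_apply _ hA]
      exact hrev s A hs hA
    have h1 : ∫⁻ y, t.indicator (fun y => ENNReal.ofReal (h y)) y
          ∂((π.restrict s).bind (fun x => P x))
        = ∫⁻ x in s, (∫⁻ y in t, ENNReal.ofReal (h y) ∂(P x)) ∂π := by
      rw [Measure.lintegral_bind (P.measurable.aemeasurable) (hH.indicator ht).aemeasurable]
      simp_rw [lintegral_indicator ht _]
    have h2 : ∫⁻ y, t.indicator (fun y => ENNReal.ofReal (h y)) y
          ∂(π.withDensity (fun y => R y s))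
        = ∫⁻ y in t, ENNReal.ofReal (h y) * R y s ∂π := by
      rw [lintegral_withDensity_eq_lintegral_mul _ (Kernel.measurable_coe R hs)
        (hH.indicator ht)]
      simp_rw [← lintegral_indicator ht _]
      congr 1
      ext y
      by_cases hy : y ∈ t <;>
        simp [Set.indicator_of_mem, Set.indicator_of_notMem, hy, mul_comm]
    rw [← h1, hmeq, h2]
  constructor
  · intro s t hs ht
    have hImeas : Measurable fun x => ∫⁻ y in t, ENNReal.ofReal (h y) ∂(P x) := by
      simp_rw [← lintegral_indicator ht _]
      exact Measurable.lintegral_kernel_prod_right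
        ((hH.indicator ht).comp measurable_snd)
    have halg : ∀ a b : ℝ≥0∞, a ≠ 0 → a ≠ ⊤ → a * (Λ⁻¹ * a⁻¹ * b) = Λ⁻¹ * b := by
      intro a b ha ha'
      rw [show a * (Λ⁻¹ * a⁻¹ * b) = (a * a⁻¹) * (Λ⁻¹ * b) by ring,
        ENNReal.mul_inv_cancel ha ha', one_mul]
    calc ∫⁻ x in s, Q x t ∂(π.withDensity fun z => ENNReal.ofReal (h z))
        = ∫⁻ x in s, ENNReal.ofReal (h x) * Q x t ∂π := by
          rw [restrict_withDensity hs,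
            lintegral_withDensity_eq_lintegral_mul _ hH (Kernel.measurable_coe Q ht)]
          rfl
      _ = ∫⁻ x in s, Λ⁻¹ * ∫⁻ y in t, ENNReal.ofReal (h y) ∂(P x) ∂π := by
          apply lintegral_congr
          intro x
          rw [hQ x t ht, halg _ _ (hHne x) ENNReal.ofReal_ne_top]
      _ = Λ⁻¹ * ∫⁻ x in s, (∫⁻ y in t, ENNReal.ofReal (h y) ∂(P x)) ∂π :=
          lintegral_const_mul _ hImeas
      _ = Λ⁻¹ * ∫⁻ y in t, ENNReal.ofReal (h y) * R y s ∂π := by rw [key s t hs ht]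
      _ = ∫⁻ y in t, Λ⁻¹ * (ENNReal.ofReal (h y) * R y s) ∂π :=
          (lintegral_const_mul _ (hH.mul (Kernel.measurable_coe R hs))).symm
      _ = ∫⁻ y in t, ENNReal.ofReal (h y) * (Λ⁻¹ * R y s) ∂π := by
          apply lintegral_congr; intro y; ring
      _ = ∫⁻ y in t, Λ⁻¹ * R y s ∂(π.withDensity fun z => ENNReal.ofReal (h z)) := by
          rw [restrict_withDensity ht,
            lintegral_withDensity_eq_lintegral_mul _ hH
              ((Kernel.measurable_coe R hs).const_mul _)]
          rfl
  · -- a.e. part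
    have hRu : (fun y => R y Set.univ) =ᵐ[π] fun _ => Λ := by
      refine ae_eq_of_forall_setLIntegral_eq_of_sigmaFinite
        (Kernel.measurable_coe R MeasurableSet.univ) measurable_const ?_
      intro t ht _
      have := hrev Set.univ t MeasurableSet.univ ht
      rw [← this]
      have : ∫⁻ x in Set.univ, P x t ∂π = (π.bind fun x => P x) t := by
        rw [Measure.restrict_univ, Measure.bind_apply ht (P.measurable.aemeasurable)]
      rw [this, hQSD, setLIntegral_const]
      simp [mul_comm]
    have hac : (π.withDensity fun z => ENNReal.ofReal (h z)) ≪ π :=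
      withDensity_absolutelyContinuous _ _
    filter_upwards [hac.ae_le hRu] with y hy
    rw [hy, ENNReal.inv_mul_cancel hΛ0 hΛtop]
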